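/- Assume: f : [0,1] × [0,∞) → [0,∞) is continuous; k : [0,1]² → [0,∞) is continuous; there exist Φ : [0,1] → [0,∞) integrable, an interval [a,b] ⊆ [0,1], and c₁ ∈ (0,1] with k(t,s) ≤ Φ(s) for all t,s ∈ [0,1] and c₁Φ(s) ≤ k(t,s) for all t ∈ [a,b], s ∈ [0,1]; λ[u] = Λ₀ + ∫₀¹ u(s) dΛ(s), where Λ₀ ≥ 0 and dΛ is a finite positive Borel measure on [0,1]; γ : [0,1] → [0,∞) is continuous with γ(t) ≥ c₂‖γ‖ for all t ∈ [a,b] for some c₂ ∈ (0,1]. Set c = min{c₁, c₂} and K = {u ∈ C[0,1] : u ≥ 0 and min_{t∈[a,b]} u(t) ≥ c‖u‖}. Define (Tu)(t) = γ(t)λ[u] + ∫₀¹ k(t,s) f(s,u(s)) ds. Then T maps K into K. -/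

import Mathlib

open Real Set MeasureTheory

/-- The supremum norm of `u` on `[0,1]`. -/
noncomputable def supNorm (u : ℝ → ℝ) : ℝ := sSup ((fun t => |u t|) '' Set.Icc (0 : ℝ) 1)

/-- The minimum of `u` on `[a,b]`. -/
noncomputable def minOnInterval (a b : ℝ) (u : ℝ → ℝ) : ℝ := sInf (u '' Set.Icc a b)

/-- Tietze extension from the closed unit square. -/
theorem ext2 (k : ℝ × ℝ → ℝ) (h : ContinuousOn k (Icc (0:ℝ) 1 ×ˢ Icc (0:ℝ) 1)) :
    ∃ g : ℝ × ℝ → ℝ, Continuous g ∧ ∀ x ∈ Icc (0:ℝ) 1 ×ˢ Icc (0:ℝ) 1, g x = k x := by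
  have hcl : IsClosed (Icc (0:ℝ) 1 ×ˢ Icc (0:ℝ) 1) := isClosed_Icc.prod isClosed_Icc
  obtain ⟨g, hg⟩ := ContinuousMap.exists_restrict_eq (Y := ℝ) hcl
    (ContinuousMap.mk _ h.restrict)
  refine ⟨g, g.continuous, fun x hx => ?_⟩
  exact congrFun (congrArg ContinuousMap.toFun hg) ⟨x, hx⟩

/-- Tietze extension from the closed unit interval. -/
theorem ext1 (F : ℝ → ℝ) (h : ContinuousOn F (Icc (0:ℝ) 1)) :
    ∃ g : ℝ → ℝ, Continuous g ∧ ∀ x ∈ Icc (0:ℝ) 1, g x = F x := by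
  obtain ⟨g, hg⟩ := ContinuousMap.exists_restrict_eq (Y := ℝ) isClosed_Icc
    (ContinuousMap.mk _ h.restrict)
  refine ⟨g, g.continuous, fun x hx => ?_⟩
  exact congrFun (congrArg ContinuousMap.toFun hg) ⟨x, hx⟩

/-- Under the standing hypotheses on `f`, `k`, `Φ`, `[a,b]`, `c₁`, the functional
`λ[u] = Λ₀ + ∫₀¹ u dΛ` (with `Λ₀ ≥ 0` and `dΛ` a finite positive measure), and `γ`
(with `γ ≥ c₂‖γ‖` on `[a,b]`), the perturbed Hammerstein operator
`(Tu)(t) = γ(t)λ[u] + ∫₀¹ k(t,s)f(s,u(s)) ds` maps the cone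
`K = {u ∈ C[0,1] : u ≥ 0, min_{[a,b]} u ≥ c‖u‖}`, `c = min{c₁,c₂}`, into itself. -/
theorem T_maps_cone_into_cone
    (f k : ℝ → ℝ → ℝ) (Φ γ : ℝ → ℝ) (a b c₁ c₂ Λ₀ : ℝ) (μ : Measure ℝ)
    [IsFiniteMeasure μ]
    (hf_cont : ContinuousOn (fun p : ℝ × ℝ => f p.1 p.2) (Set.Icc 0 1 ×ˢ Set.Ici 0))
    (hf_nonneg : ∀ t ∈ Set.Icc (0 : ℝ) 1, ∀ u : ℝ, 0 ≤ u → 0 ≤ f t u)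
    (hk_cont : ContinuousOn (fun p : ℝ × ℝ => k p.1 p.2) (Set.Icc 0 1 ×ˢ Set.Icc 0 1))
    (hk_nonneg : ∀ t ∈ Set.Icc (0 : ℝ) 1, ∀ s ∈ Set.Icc (0 : ℝ) 1, 0 ≤ k t s)
    (hΦ_int : IntegrableOn Φ (Set.Icc 0 1))
    (hΦ_nonneg : ∀ s ∈ Set.Icc (0 : ℝ) 1, 0 ≤ Φ s)
    (ha : 0 ≤ a) (hab : a ≤ b) (hb : b ≤ 1)
    (hc₁ : 0 < c₁) (hc₁' : c₁ ≤ 1) (hc₂ : 0 < c₂) (hc₂' : c₂ ≤ 1)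
    (hkΦ : ∀ t ∈ Set.Icc (0 : ℝ) 1, ∀ s ∈ Set.Icc (0 : ℝ) 1, k t s ≤ Φ s)
    (hkΦ' : ∀ t ∈ Set.Icc a b, ∀ s ∈ Set.Icc (0 : ℝ) 1, c₁ * Φ s ≤ k t s)
    (hΛ₀ : 0 ≤ Λ₀)
    (hγ_cont : ContinuousOn γ (Set.Icc 0 1))
    (hγ_nonneg : ∀ t ∈ Set.Icc (0 : ℝ) 1, 0 ≤ γ t)
    (hγc₂ : ∀ t ∈ Set.Icc a b, c₂ * supNorm γ ≤ γ t)
    (lam : (ℝ → ℝ) → ℝ)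
    (hlam : ∀ u : ℝ → ℝ, lam u = Λ₀ + ∫ s in Set.Icc (0 : ℝ) 1, u s ∂μ)
    (c : ℝ) (hc : c = min c₁ c₂)
    (K : Set (ℝ → ℝ))
    (hK : K = {u | ContinuousOn u (Set.Icc 0 1) ∧ (∀ t ∈ Set.Icc (0 : ℝ) 1, 0 ≤ u t) ∧
      c * supNorm u ≤ minOnInterval a b u})
    (T : (ℝ → ℝ) → ℝ → ℝ)
    (hT : ∀ u : ℝ → ℝ, ∀ t : ℝ,
      T u t = γ t * lam u + ∫ s in (0 : ℝ)..1, k t s * f s (u s)) :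
    ∀ u ∈ K, T u ∈ K := by
  intro u hu
  rw [hK] at hu ⊢
  obtain ⟨hu1, hu2, _⟩ := hu
  set F : ℝ → ℝ := fun s => f s (u s) with hF
  have hF_cont : ContinuousOn F (Set.Icc (0:ℝ) 1) :=
    hf_cont.comp (continuousOn_id.prodMk hu1) (fun s (hs : s ∈ Set.Icc (0:ℝ) 1) => ⟨hs, hu2 s hs⟩)
  have hF_nonneg : ∀ s ∈ Set.Icc (0:ℝ) 1, 0 ≤ F s := fun s hs => hf_nonneg s hs _ (hu2 s hs)
  -- nonnegativity of the functional
  have hlam_nn : 0 ≤ lam u := by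
    rw [hlam]
    exact add_nonneg hΛ₀ (setIntegral_nonneg measurableSet_Icc hu2)
  -- sup norm of γ
  have hγbdd : BddAbove ((fun t => |γ t|) '' Set.Icc (0:ℝ) 1) :=
    ((isCompact_Icc).image_of_continuousOn hγ_cont.abs).bddAbove
  have hγle : ∀ t ∈ Set.Icc (0:ℝ) 1, γ t ≤ supNorm γ := fun t ht =>
    (le_abs_self _).trans (le_csSup hγbdd ⟨t, ht, rfl⟩)
  have hγsup_nn : 0 ≤ supNorm γ :=
    (abs_nonneg (γ 0)).trans (le_csSup hγbdd ⟨0, ⟨le_refl 0, zero_le_one⟩, rfl⟩)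
  -- integrability facts
  have huIcc : Set.uIcc (0:ℝ) 1 = Set.Icc (0:ℝ) 1 := Set.uIcc_of_le zero_le_one
  have hΦF_intOn : IntegrableOn (fun s => Φ s * F s) (Set.Icc (0:ℝ) 1) :=
    hΦ_int.mul_continuousOn hF_cont isCompact_Icc
  have hΦF_int : IntervalIntegrable (fun s => Φ s * F s) volume 0 1 := by
    rw [intervalIntegrable_iff_integrableOn_Icc_of_le zero_le_one]; exact hΦF_intOn
  have hkF_int : ∀ t ∈ Set.Icc (0:ℝ) 1, IntervalIntegrable (fun s => k t s * F s) volume 0 1 := by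
    intro t ht
    have hkt : ContinuousOn (fun s => k t s) (Set.Icc (0:ℝ) 1) :=
      hk_cont.comp (Continuous.continuousOn (continuous_const.prodMk continuous_id))
        (fun s hs => ⟨ht, hs⟩)
    exact ContinuousOn.intervalIntegrable_of_Icc (μ := volume) zero_le_one (hkt.mul hF_cont)
  set Iφ : ℝ := ∫ s in (0:ℝ)..1, Φ s * F s with hIφ
  have hIφ_nn : 0 ≤ Iφ := intervalIntegral.integral_nonneg zero_le_one
      (fun s hs => mul_nonneg (hΦ_nonneg s hs) (hF_nonneg s hs))
  have hupper : ∀ t ∈ Set.Icc (0:ℝ) 1, (∫ s in (0:ℝ)..1, k t s * F s) ≤ Iφ := fun t ht =>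
    intervalIntegral.integral_mono_on zero_le_one (hkF_int t ht) hΦF_int
      (fun s hs => mul_le_mul_of_nonneg_right (hkΦ t ht s hs) (hF_nonneg s hs))
  have hint_nn : ∀ t ∈ Set.Icc (0:ℝ) 1, 0 ≤ ∫ s in (0:ℝ)..1, k t s * F s := fun t ht =>
    intervalIntegral.integral_nonneg zero_le_one
      (fun s hs => mul_nonneg (hk_nonneg t ht s hs) (hF_nonneg s hs))
  have hsub : Set.Icc a b ⊆ Set.Icc (0:ℝ) 1 := Set.Icc_subset_Icc ha hb
  have hlower : ∀ t ∈ Set.Icc a b, c₁ * Iφ ≤ ∫ s in (0:ℝ)..1, k t s * F s := by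
    intro t ht
    have h1 : IntervalIntegrable (fun s => c₁ * (Φ s * F s)) volume 0 1 := hΦF_int.const_mul c₁
    calc c₁ * Iφ = ∫ s in (0:ℝ)..1, c₁ * (Φ s * F s) :=
          (intervalIntegral.integral_const_mul _ _).symm
      _ ≤ ∫ s in (0:ℝ)..1, k t s * F s := by
          refine intervalIntegral.integral_mono_on zero_le_one h1 (hkF_int t (hsub ht)) ?_
          intro s hs
          calc c₁ * (Φ s * F s) = (c₁ * Φ s) * F s := by ring
            _ ≤ k t s * F s := mul_le_mul_of_nonneg_right (hkΦ' t ht s hs) (hF_nonneg s hs)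
  -- key bounds for T u
  set M : ℝ := supNorm γ * lam u + Iφ with hM
  have hM_nn : 0 ≤ M := add_nonneg (mul_nonneg hγsup_nn hlam_nn) hIφ_nn
  have hTle : ∀ t ∈ Set.Icc (0:ℝ) 1, T u t ≤ M := by
    intro t ht; rw [hT]
    exact add_le_add (mul_le_mul_of_nonneg_right (hγle t ht) hlam_nn) (hupper t ht)
  have hT_nn : ∀ t ∈ Set.Icc (0:ℝ) 1, 0 ≤ T u t := by
    intro t ht; rw [hT]
    exact add_nonneg (mul_nonneg (hγ_nonneg t ht) hlam_nn) (hint_nn t ht)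
  have hc_le1 : c ≤ c₁ := hc ▸ min_le_left _ _
  have hc_le2 : c ≤ c₂ := hc ▸ min_le_right _ _
  have hc_nn : 0 ≤ c := hc ▸ le_min hc₁.le hc₂.le
  have hTlow : ∀ t ∈ Set.Icc a b, c * M ≤ T u t := by
    intro t ht; rw [hT]
    have h1 : c * (supNorm γ * lam u) ≤ γ t * lam u :=
      calc c * (supNorm γ * lam u) ≤ c₂ * (supNorm γ * lam u) :=
            mul_le_mul_of_nonneg_right hc_le2 (mul_nonneg hγsup_nn hlam_nn)
        _ = (c₂ * supNorm γ) * lam u := by ring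
        _ ≤ γ t * lam u := mul_le_mul_of_nonneg_right (hγc₂ t ht) hlam_nn
    have h2 : c * Iφ ≤ ∫ s in (0:ℝ)..1, k t s * F s :=
      (mul_le_mul_of_nonneg_right hc_le1 hIφ_nn).trans (hlower t ht)
    calc c * M = c * (supNorm γ * lam u) + c * Iφ := by rw [hM]; ring
      _ ≤ _ := add_le_add h1 h2
  -- sup and inf estimates
  have hsupT : supNorm (T u) ≤ M := by
    apply Real.sSup_le _ hM_nn
    rintro x ⟨t, ht, rfl⟩
    simpa [abs_of_nonneg (hT_nn t ht)] using hTle t ht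
  have hminT : c * M ≤ minOnInterval a b (T u) := by
    rw [minOnInterval]
    refine le_csInf ⟨T u a, Set.mem_image_of_mem _ (Set.left_mem_Icc.mpr hab)⟩ ?_
    rintro x ⟨t, ht, rfl⟩
    exact hTlow t ht
  -- continuity of T u
  obtain ⟨kE, hkE_cont, hkE_eq⟩ := ext2 _ hk_cont
  obtain ⟨FE, hFE_cont, hFE_eq⟩ := ext1 F hF_cont
  have hG : Continuous fun t => ∫ s in (0:ℝ)..1, kE (t, s) * FE s := by
    apply intervalIntegral.continuous_parametric_intervalIntegral_of_continuous'
    exact (hkE_cont.comp continuous_id).mul (hFE_cont.comp continuous_snd)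
  have hG' : ContinuousOn (fun t => ∫ s in (0:ℝ)..1, k t s * F s) (Set.Icc (0:ℝ) 1) := by
    apply ContinuousOn.congr hG.continuousOn
    intro t ht
    apply intervalIntegral.integral_congr
    intro s hs
    rw [huIcc] at hs
    show k t s * F s = kE (t, s) * FE s
    rw [hkE_eq (t, s) ⟨ht, hs⟩, hFE_eq s hs]
  have hTcont : ContinuousOn (T u) (Set.Icc (0:ℝ) 1) := by
    apply ContinuousOn.congr ((hγ_cont.mul (continuousOn_const (c := lam u))).add hG')
    intro t _
    rw [hT]
    rfl
  refine ⟨hTcont, hT_nn, ?_⟩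
  calc c * supNorm (T u) ≤ c * M := mul_le_mul_of_nonneg_left hsupT hc_nn
    _ ≤ minOnInterval a b (T u) := hminT
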